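/- Let U be uniform on [0,1] and for λ ≥ 0 let G⁻¹(u;λ) denote the generalized inverse of the Poisson(λ) CDF. Then for any λ, μ ≥ 0, E[ |G⁻¹(U;λ) − G⁻¹(U;μ)| ] = |λ − μ|. -/

import Mathlib

open MeasureTheory

/-- The CDF of a Poisson distribution with mean `q`, evaluated at `m`. -/
noncomputable def poissonCDF (q : ℝ) (m : ℕ) : ℝ :=
  ∑ i ∈ Finset.range (m + 1), Real.exp (-q) * q ^ i / (Nat.factorial i)

/-- The generalized inverse `G⁻¹(u; q) = inf {m : G(m; q) ≥ u}` of the Poisson CDF. -/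
noncomputable def poissonInvCDF (q : ℝ) (u : ℝ) : ℕ :=
  sInf {m : ℕ | u ≤ poissonCDF q m}

namespace PoissonAux

/-- The Poisson pmf. -/
noncomputable def pmf (q : ℝ) (i : ℕ) : ℝ := Real.exp (-q) * q ^ i / (Nat.factorial i)

lemma pmf_nonneg {q : ℝ} (hq : 0 ≤ q) (i : ℕ) : 0 ≤ pmf q i := by
  unfold pmf; positivity

lemma hasSum_pmf {q : ℝ} : HasSum (pmf q) 1 := by
  have h := NormedSpace.expSeries_div_hasSum_exp (𝔸 := ℝ) q
  rw [← Real.exp_eq_exp_ℝ] at h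
  have h2 := h.mul_left (Real.exp (-q))
  rw [← Real.exp_add, neg_add_cancel, Real.exp_zero] at h2
  convert h2 using 2 with i
  · rfl
  unfold pmf
  ring

lemma cdf_eq (q : ℝ) (m : ℕ) :
    poissonCDF q m = ∑ i ∈ Finset.range (m + 1), pmf q i := rfl

lemma cdf_le_one {q : ℝ} (hq : 0 ≤ q) (m : ℕ) : poissonCDF q m ≤ 1 := by
  rw [cdf_eq]
  exact sum_le_hasSum _ (fun i _ => pmf_nonneg hq i) hasSum_pmf

lemma cdf_pos {q : ℝ} (hq : 0 ≤ q) (m : ℕ) : 0 < poissonCDF q m := by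
  rw [cdf_eq]
  have h0 : (0:ℕ) ∈ Finset.range (m+1) := by simp
  refine lt_of_lt_of_le ?_ (Finset.single_le_sum (fun i _ => pmf_nonneg hq i) h0)
  unfold pmf
  positivity

lemma cdf_mono {q : ℝ} (hq : 0 ≤ q) : Monotone (poissonCDF q) := by
  intro a b hab
  rw [cdf_eq, cdf_eq]
  exact Finset.sum_le_sum_of_subset_of_nonneg
    (by simpa using Nat.add_le_add_right hab 1) (fun i _ _ => pmf_nonneg hq i)

lemma cdf_tendsto {q : ℝ} : Filter.Tendsto (poissonCDF q) Filter.atTop (nhds 1) := by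
  have h := (hasSum_pmf (q := q)).tendsto_sum_nat
  exact h.comp (Filter.tendsto_add_atTop_nat 1)


/-- On `u < 1`, the defining set is nonempty. -/
lemma set_nonempty {q u : ℝ} (hu : u < 1) : {m : ℕ | u ≤ poissonCDF q m}.Nonempty := by
  have h := ((cdf_tendsto (q := q)).eventually (eventually_gt_nhds hu)).exists
  exact ⟨h.choose, h.choose_spec.le⟩

/-- Galois connection on (0,1). -/
lemma inv_le_iff {q u : ℝ} (hq : 0 ≤ q) (hu : u < 1) (m : ℕ) :
    poissonInvCDF q u ≤ m ↔ u ≤ poissonCDF q m := by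
  constructor
  · intro h
    have hne := set_nonempty (q := q) hu
    have hmem := Nat.sInf_mem hne
    exact le_trans hmem (cdf_mono hq h)
  · intro h
    exact Nat.sInf_le h

lemma lt_inv_iff {q u : ℝ} (hq : 0 ≤ q) (hu : u < 1) (m : ℕ) :
    m < poissonInvCDF q u ↔ poissonCDF q m < u := by
  rw [← not_le, ← not_le, inv_le_iff hq hu]


lemma levelSet_eq {q : ℝ} (hq : 0 ≤ q) (n : ℕ) :
    {u : ℝ | poissonInvCDF q u ≤ n} =
      Set.Iic (poissonCDF q n) ∪ ⋂ k, Set.Ioi (poissonCDF q k) := by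
  ext u
  simp only [Set.mem_setOf_eq, Set.mem_union, Set.mem_Iic, Set.mem_iInter, Set.mem_Ioi]
  constructor
  · intro h
    by_cases hne : {m : ℕ | u ≤ poissonCDF q m}.Nonempty
    · left
      have hmem := Nat.sInf_mem hne
      exact le_trans hmem (cdf_mono hq h)
    · right
      intro k
      by_contra hk
      exact hne ⟨k, not_lt.mp hk⟩
  · rintro (h | h)
    · exact Nat.sInf_le h
    · have he : {m : ℕ | u ≤ poissonCDF q m} = ∅ := by
        ext m
        simp only [Set.mem_setOf_eq, Set.mem_empty_iff_false, iff_false, not_le]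
        exact h m
      simp [poissonInvCDF, he]

lemma measurableSet_level {q : ℝ} (hq : 0 ≤ q) (n : ℕ) :
    MeasurableSet {u : ℝ | poissonInvCDF q u ≤ n} := by
  rw [levelSet_eq hq]
  exact measurableSet_Iic.union (MeasurableSet.iInter fun k => measurableSet_Ioi)

lemma measurable_inv {q : ℝ} (hq : 0 ≤ q) : Measurable (poissonInvCDF q) := by
  apply measurable_to_countable'
  intro n
  match n with
  | 0 =>
      have : poissonInvCDF q ⁻¹' {0} = {u : ℝ | poissonInvCDF q u ≤ 0} := by
        ext u; simp [Nat.le_zero]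
      rw [this]; exact measurableSet_level hq 0
  | n + 1 =>
      have : poissonInvCDF q ⁻¹' {n + 1} =
          {u : ℝ | poissonInvCDF q u ≤ n + 1} \ {u : ℝ | poissonInvCDF q u ≤ n} := by
        ext u
        simp only [Set.mem_preimage, Set.mem_singleton_iff, Set.mem_diff, Set.mem_setOf_eq]
        omega
      rw [this]; exact (measurableSet_level hq (n+1)).diff (measurableSet_level hq n)


lemma hasDerivAt_cdf (m : ℕ) (q : ℝ) :
    HasDerivAt (fun x => poissonCDF x m)
      (-(Real.exp (-q) * q ^ m / (Nat.factorial m))) q := by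
  have hterm : ∀ i : ℕ, HasDerivAt (fun x => Real.exp (-x) * x ^ i / (Nat.factorial i))
      ((-Real.exp (-q) * q ^ i + Real.exp (-q) * (i * q ^ (i - 1))) / (Nat.factorial i)) q := by
    intro i
    have h1 : HasDerivAt (fun x : ℝ => Real.exp (-x)) (-Real.exp (-q)) q := by
      simpa using (hasDerivAt_neg q).exp
    have h2 : HasDerivAt (fun x : ℝ => x ^ i) ((i : ℝ) * q ^ (i - 1)) q := hasDerivAt_pow i q
    simpa using (h1.mul h2).div_const (Nat.factorial i : ℝ)
  have hsum := HasDerivAt.fun_sum (u := Finset.range (m + 1)) (fun i _ => hterm i)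
  have key : ∑ i ∈ Finset.range (m + 1),
      ((-Real.exp (-q) * q ^ i + Real.exp (-q) * ((i : ℝ) * q ^ (i - 1))) / (Nat.factorial i))
      = -(Real.exp (-q) * q ^ m / (Nat.factorial m)) := by
    have hsplit : ∀ i : ℕ,
        ((-Real.exp (-q) * q ^ i + Real.exp (-q) * ((i : ℝ) * q ^ (i - 1))) / (Nat.factorial i))
        = Real.exp (-q) * ((i : ℝ) * q ^ (i - 1)) / (Nat.factorial i)
          - Real.exp (-q) * q ^ i / (Nat.factorial i) := by
      intro i; ring
    rw [Finset.sum_congr rfl (fun i _ => hsplit i), Finset.sum_sub_distrib]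
    have hshift : ∑ i ∈ Finset.range (m + 1),
        Real.exp (-q) * ((i : ℝ) * q ^ (i - 1)) / (Nat.factorial i)
        = ∑ j ∈ Finset.range m, Real.exp (-q) * q ^ j / (Nat.factorial j) := by
      rw [Finset.sum_range_succ']
      have h0 : Real.exp (-q) * (((0:ℕ) : ℝ) * q ^ (0 - 1)) / (Nat.factorial 0) = 0 := by simp
      rw [h0, add_zero]
      refine Finset.sum_congr rfl (fun j _ => ?_)
      have hfact : ((Nat.factorial (j + 1) : ℝ)) = ((j : ℝ) + 1) * (Nat.factorial j : ℝ) := by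
        rw [Nat.factorial_succ]; push_cast; ring
      have hj1 : ((j : ℝ) + 1) ≠ 0 := by positivity
      have hfj : (Nat.factorial j : ℝ) ≠ 0 := Nat.cast_ne_zero.mpr (Nat.factorial_ne_zero j)
      have : (((j + 1 : ℕ) : ℝ)) = (j : ℝ) + 1 := by push_cast; ring
      rw [show (j + 1) - 1 = j from rfl, hfact, this]
      field_simp
    rw [hshift, Finset.sum_range_succ]
    ring
  rw [← key]
  exact hsum

lemma cdf_anti (m : ℕ) {a b : ℝ} (h0 : 0 ≤ a) (hab : a ≤ b) :
    poissonCDF b m ≤ poissonCDF a m := by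
  have hd : ∀ x : ℝ, HasDerivAt (fun y => poissonCDF y m)
      (-(Real.exp (-x) * x ^ m / (Nat.factorial m))) x := hasDerivAt_cdf m
  have hanti : AntitoneOn (fun y => poissonCDF y m) (Set.Ici 0) := by
    refine antitoneOn_of_deriv_nonpos (convex_Ici 0)
      (fun x _ => (hd x).continuousAt.continuousWithinAt)
      (fun x _ => (hd x).differentiableAt.differentiableWithinAt) ?_
    intro x hx
    rw [interior_Ici] at hx
    rw [(hd x).deriv]
    have : 0 ≤ Real.exp (-x) * x ^ m / (Nat.factorial m) := by
      have := le_of_lt (Set.mem_Ioi.mp hx); positivity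
    linarith
  exact hanti h0 (le_trans h0 hab) hab

lemma inv_mono_q {a b u : ℝ} (h0 : 0 ≤ a) (hab : a ≤ b) (hu : u < 1) :
    poissonInvCDF a u ≤ poissonInvCDF b u := by
  rw [inv_le_iff h0 hu]
  have h1 : u ≤ poissonCDF b (poissonInvCDF b u) :=
    (inv_le_iff (le_trans h0 hab) hu _).mp le_rfl
  exact h1.trans (cdf_anti _ h0 hab)


open scoped ENNReal

noncomputable def P (q : ℝ) (k : ℕ) : ℝ≥0∞ := ENNReal.ofReal (pmf q k)

lemma tsum_P {q : ℝ} (hq : 0 ≤ q) : ∑' k, P q k = 1 := by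
  rw [show (1 : ℝ≥0∞) = ENNReal.ofReal 1 from (ENNReal.ofReal_one).symm,
    ← (hasSum_pmf (q := q)).tsum_eq]
  exact (ENNReal.ofReal_tsum_of_nonneg (pmf_nonneg hq) hasSum_pmf.summable).symm

lemma P_partial {q : ℝ} (hq : 0 ≤ q) (m : ℕ) :
    ENNReal.ofReal (poissonCDF q m) = ∑ k ∈ Finset.range (m + 1), P q k := by
  rw [cdf_eq]
  exact ENNReal.ofReal_sum_of_nonneg (fun i _ => pmf_nonneg hq i)

lemma ofReal_one_sub_cdf {q : ℝ} (hq : 0 ≤ q) (m : ℕ) :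
    ENNReal.ofReal (1 - poissonCDF q m) = ∑' k, if m < k then P q k else 0 := by
  have hsplit : (∑' k, P q k)
      = (∑ k ∈ Finset.range (m + 1), P q k) + ∑' k, if m < k then P q k else 0 := by
    have h1 : ∀ k, P q k = (if k ≤ m then P q k else 0) + (if m < k then P q k else 0) := by
      intro k
      by_cases h : k ≤ m
      · simp [h, not_lt.mpr h]
      · simp [h, not_le.mp h]
    rw [tsum_congr h1, ENNReal.tsum_add]
    congr 1
    rw [tsum_eq_sum (s := Finset.range (m + 1))
      (fun k hk => if_neg (by simp at hk; omega))]
    exact Finset.sum_congr rfl (fun k hk => if_pos (by simp at hk; omega))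
  have hfin : (∑ k ∈ Finset.range (m + 1), P q k) ≠ ⊤ := by
    refine ne_top_of_le_ne_top ENNReal.one_ne_top ?_
    rw [← tsum_P hq]
    exact ENNReal.sum_le_tsum _
  rw [ENNReal.ofReal_sub _ (cdf_pos hq m).le, ENNReal.ofReal_one, P_partial hq m,
    ← tsum_P hq, hsplit]
  exact ENNReal.add_sub_cancel_left hfin

lemma hasSum_mean {q : ℝ} (_hq : 0 ≤ q) : HasSum (fun k : ℕ => (k : ℝ) * pmf q k) q := by
  have h := (hasSum_pmf (q := q)).mul_left q
  rw [mul_one] at h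
  have hshift : (fun n : ℕ => ((n + 1 : ℕ) : ℝ) * pmf q (n + 1)) = fun n => q * pmf q n := by
    funext n
    unfold pmf
    have hfact : ((Nat.factorial (n + 1) : ℝ)) = ((n : ℝ) + 1) * (Nat.factorial n : ℝ) := by
      rw [Nat.factorial_succ]; push_cast; ring
    have hn1 : ((n : ℝ) + 1) ≠ 0 := by positivity
    have hfn : (Nat.factorial n : ℝ) ≠ 0 := Nat.cast_ne_zero.mpr (Nat.factorial_ne_zero n)
    rw [hfact]
    push_cast
    field_simp
    ring
  have h2 : HasSum (fun n : ℕ => ((n + 1 : ℕ) : ℝ) * pmf q (n + 1)) q := by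
    rw [hshift]; exact h
  have h3 := (hasSum_nat_add_iff (f := fun k : ℕ => (k : ℝ) * pmf q k) 1).mp h2
  simpa using h3

lemma tsum_tail {q : ℝ} (hq : 0 ≤ q) :
    ∑' m : ℕ, ENNReal.ofReal (1 - poissonCDF q m) = ENNReal.ofReal q := by
  rw [tsum_congr (ofReal_one_sub_cdf hq), ENNReal.tsum_comm]
  have hinner : ∀ k : ℕ, (∑' m : ℕ, if m < k then P q k else 0) = (k : ℝ≥0∞) * P q k := by
    intro k
    rw [tsum_eq_sum (s := Finset.range k) (fun m hm => if_neg (by simp at hm; omega))]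
    rw [Finset.sum_congr rfl (fun m hm => if_pos (by simp at hm; omega))]
    simp [Finset.sum_const, Finset.card_range, nsmul_eq_mul]
  rw [tsum_congr hinner]
  have hterm : ∀ k : ℕ, (k : ℝ≥0∞) * P q k = ENNReal.ofReal ((k : ℝ) * pmf q k) := by
    intro k
    rw [ENNReal.ofReal_mul (Nat.cast_nonneg k), ENNReal.ofReal_natCast]
    rfl
  rw [tsum_congr hterm, ← ENNReal.ofReal_tsum_of_nonneg
    (fun k => mul_nonneg (Nat.cast_nonneg k) (pmf_nonneg hq k)) (hasSum_mean hq).summable,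
    (hasSum_mean hq).tsum_eq]


lemma indicator_sum {q u : ℝ} (hq : 0 ≤ q) (hu : u < 1) :
    ((poissonInvCDF q u : ℕ) : ℝ≥0∞)
      = ∑' m : ℕ, (Set.Ioi (poissonCDF q m)).indicator (fun _ => (1 : ℝ≥0∞)) u := by
  have h : ∀ m : ℕ, (Set.Ioi (poissonCDF q m)).indicator (fun _ => (1 : ℝ≥0∞)) u
      = if m < poissonInvCDF q u then 1 else 0 := by
    intro m
    rw [Set.indicator_apply]
    simp only [Set.mem_Ioi]
    by_cases h : poissonCDF q m < u
    · rw [if_pos h, if_pos ((lt_inv_iff hq hu m).mpr h)]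
    · rw [if_neg h, if_neg (fun hc => h ((lt_inv_iff hq hu m).mp hc))]
  rw [tsum_congr h, tsum_eq_sum (s := Finset.range (poissonInvCDF q u))
    (fun m hm => if_neg (by simp at hm; omega))]
  rw [Finset.sum_congr rfl (fun m hm => if_pos (by simp at hm; omega))]
  simp

lemma lintegral_inv {q : ℝ} (hq : 0 ≤ q) :
    ∫⁻ u in Set.Ioo (0 : ℝ) 1, ((poissonInvCDF q u : ℕ) : ℝ≥0∞) = ENNReal.ofReal q := by
  rw [setLIntegral_congr_fun measurableSet_Ioo
    (fun u hu => indicator_sum hq hu.2)]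
  rw [lintegral_tsum (fun m => (measurable_const.indicator measurableSet_Ioi).aemeasurable)]
  have hval : ∀ m : ℕ,
      ∫⁻ u in Set.Ioo (0:ℝ) 1, (Set.Ioi (poissonCDF q m)).indicator (fun _ => (1:ℝ≥0∞)) u
      = ENNReal.ofReal (1 - poissonCDF q m) := by
    intro m
    rw [lintegral_indicator_const measurableSet_Ioi, one_mul,
      Measure.restrict_apply measurableSet_Ioi]
    have hset : Set.Ioi (poissonCDF q m) ∩ Set.Ioo (0:ℝ) 1 = Set.Ioo (poissonCDF q m) 1 := by
      ext x
      simp only [Set.mem_inter_iff, Set.mem_Ioi, Set.mem_Ioo]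
      constructor
      · rintro ⟨h1, _, h3⟩; exact ⟨h1, h3⟩
      · rintro ⟨h1, h2⟩; exact ⟨h1, lt_trans (cdf_pos hq m) h1, h2⟩
    rw [hset, Real.volume_Ioo]
  rw [tsum_congr hval, tsum_tail hq]

lemma measurable_cast_inv {q : ℝ} (hq : 0 ≤ q) :
    Measurable (fun u => ((poissonInvCDF q u : ℕ) : ℝ)) :=
  measurable_from_nat.comp (measurable_inv hq)

lemma integrable_inv {q : ℝ} (hq : 0 ≤ q) :
    IntegrableOn (fun u => ((poissonInvCDF q u : ℕ) : ℝ)) (Set.Ioo 0 1) := by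
  constructor
  · exact (measurable_cast_inv hq).aestronglyMeasurable
  · rw [HasFiniteIntegral]
    have : ∀ u : ℝ, (‖((poissonInvCDF q u : ℕ) : ℝ)‖ₑ)
        = ((poissonInvCDF q u : ℕ) : ℝ≥0∞) := by
      intro u
      simp
    rw [lintegral_congr this, lintegral_inv hq]
    exact ENNReal.ofReal_lt_top

lemma integral_inv {q : ℝ} (hq : 0 ≤ q) :
    ∫ u in Set.Ioo (0:ℝ) 1, ((poissonInvCDF q u : ℕ) : ℝ) = q := by
  rw [integral_eq_lintegral_of_nonneg_ae
    (Filter.Eventually.of_forall (fun u => Nat.cast_nonneg _))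
    (measurable_cast_inv hq).aestronglyMeasurable]
  have : ∀ u : ℝ, ENNReal.ofReal ((poissonInvCDF q u : ℕ) : ℝ)
      = ((poissonInvCDF q u : ℕ) : ℝ≥0∞) := fun u => ENNReal.ofReal_natCast _
  rw [lintegral_congr this, lintegral_inv hq, ENNReal.toReal_ofReal hq]

end PoissonAux

open PoissonAux in
theorem poisson_inverse_coupling_mean (lam mu : ℝ) (hlam : 0 ≤ lam) (hmu : 0 ≤ mu) :
    ∫ u in Set.Icc (0 : ℝ) 1,
        |(poissonInvCDF lam u : ℝ) - (poissonInvCDF mu u : ℝ)| = |lam - mu| := by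
  wlog h : lam ≤ mu generalizing lam mu
  · have := this mu lam hmu hlam (le_of_not_ge h)
    rw [abs_sub_comm, ← this]
    congr 1
    funext u
    rw [abs_sub_comm]
  rw [show |lam - mu| = mu - lam from by rw [abs_sub_comm]; exact abs_of_nonneg (by linarith)]
  rw [integral_Icc_eq_integral_Ioo]
  have hcong : Set.EqOn (fun u => |(poissonInvCDF lam u : ℝ) - (poissonInvCDF mu u : ℝ)|)
      (fun u => ((poissonInvCDF mu u : ℕ) : ℝ) - ((poissonInvCDF lam u : ℕ) : ℝ))
      (Set.Ioo 0 1) := by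
    intro u hu
    simp only
    rw [abs_sub_comm, abs_of_nonneg (sub_nonneg.mpr (Nat.cast_le.mpr
      (inv_mono_q hlam h hu.2)))]
  rw [setIntegral_congr_fun measurableSet_Ioo hcong,
    integral_sub (integrable_inv hmu) (integrable_inv hlam),
    integral_inv hmu, integral_inv hlam]
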